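/- Define the one-step rewriting relation →_Π on V = 𝔖(Z) →₀ k (the rewriting system of the inverse average operator identity ⌊x⌋⌊y⌋ = ⌊⌊x⌋y⌋): f →_Π g iff there exist a context q and nonempty bracketed words u, v such that the word t := q[⌊u⌋ ++ ⌊v⌋] lies in supp(f) and g = f − f(t)·δ_t + f(t)·δ_{q[⌊⌊u⌋ ++ v⌋]}. Then →_Π is convergent (terminating and confluent). -/

import Mathlib

/-- Bracketed letters on `Z`: either a generator, or the letter `⌊w⌋` obtained by
applying the formal operator `⌊ ⌋` to a nonempty word `w = h :: t`. -/
inductive BLtr (Z : Type*) where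
  | of : Z → BLtr Z
  | flr : BLtr Z → List (BLtr Z) → BLtr Z

/-- Bracketed words on `Z`: nonempty lists of bracketed letters. -/
def BWord (Z : Type*) := {l : List (BLtr Z) // l ≠ []}

/-- Concatenation of bracketed words. -/
def BWord.cat {Z : Type*} (u v : BWord Z) : BWord Z :=
  ⟨u.1 ++ v.1, by
    intro h
    rcases List.append_eq_nil_iff.mp h with ⟨h1, _⟩
    exact u.2 h1⟩

/-- `⌊w⌋`: the one-letter word obtained by applying the formal operator to `w`. -/
def BWord.flr {Z : Type*} (w : BWord Z) : BWord Z :=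
  ⟨[BLtr.flr (w.1.head w.2) w.1.tail], by simp⟩

/-- Contexts (`⋆`-words) on `Z`. -/
inductive Ctx (Z : Type*) where
  | base : List (BLtr Z) → List (BLtr Z) → Ctx Z
  | deep : List (BLtr Z) → List (BLtr Z) → Ctx Z → Ctx Z

/-- Substitution of a bracketed word into a context. -/
def Ctx.subst {Z : Type*} : Ctx Z → BWord Z → BWord Z
  | .base l r, u => ⟨l ++ u.1 ++ r, by
      intro h
      rcases List.append_eq_nil_iff.mp h with ⟨h1, _⟩
      rcases List.append_eq_nil_iff.mp h1 with ⟨_, h2⟩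
      exact u.2 h2⟩
  | .deep l r q, u => ⟨l ++ (BWord.flr (q.subst u)).1 ++ r, by
      intro h
      rcases List.append_eq_nil_iff.mp h with ⟨h1, _⟩
      rcases List.append_eq_nil_iff.mp h1 with ⟨_, h2⟩
      exact (BWord.flr (q.subst u)).2 h2⟩

/-- Termination of a binary relation: no infinite chain of one-step rewritings. -/
def RelTerminating {V : Type*} (r : V → V → Prop) : Prop :=
  ¬ ∃ f : ℕ → V, ∀ n, r (f n) (f (n + 1))

/-- Confluence of a binary relation. -/
def RelConfluent {V : Type*} (r : V → V → Prop) : Prop :=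
  ∀ f g₁ g₂ : V, Relation.ReflTransGen r f g₁ → Relation.ReflTransGen r f g₂ →
    ∃ h, Relation.ReflTransGen r g₁ h ∧ Relation.ReflTransGen r g₂ h

/-- One-step rewriting relation of the inverse average operator identity
`⌊x⌋⌊y⌋ = ⌊⌊x⌋y⌋`. -/
def InvAvgStep {Z k : Type*} [Field k] (f g : BWord Z →₀ k) : Prop :=
  ∃ (q : Ctx Z) (u v : BWord Z),
    f (q.subst ((u.flr).cat v.flr)) ≠ 0 ∧
    g = f - Finsupp.single (q.subst ((u.flr).cat v.flr)) (f (q.subst ((u.flr).cat v.flr)))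
        + f (q.subst ((u.flr).cat v.flr)) •
          Finsupp.single (q.subst (BWord.flr ((u.flr).cat v))) (1 : k)
namespace IAvg
variable {Z : Type*}

/-- Normalized cons. -/
def consN : BLtr Z → BLtr Z × List (BLtr Z) → BLtr Z × List (BLtr Z)
  | .of z, p => (.of z, p.1 :: p.2)
  | .flr h t, (.of z, rest) => (.flr h t, .of z :: rest)
  | .flr h t, (.flr h' t', rest) =>
      let q := consN (.flr h t) (h', t')
      (.flr q.1 q.2, rest)
termination_by _ p => sizeOf p.1 + sizeOf p.2
decreasing_by simp; omega

mutual
/-- Normal form of a letter. -/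
def eL : BLtr Z → BLtr Z
  | .of z => .of z
  | .flr h t => .flr (eW h t).1 (eW h t).2
termination_by a => sizeOf a
decreasing_by all_goals (simp; try omega)
/-- Normal form of the nonempty word `h :: t`, as a (head, tail) pair. -/
def eW : BLtr Z → List (BLtr Z) → BLtr Z × List (BLtr Z)
  | h, [] => (eL h, [])
  | h, a :: t => consN (eL h) (eW a t)
termination_by h t => sizeOf h + sizeOf t
decreasing_by all_goals (simp; try omega)
end

mutual
/-- Node count of a letter. -/
def nL : BLtr Z → ℕ
  | .of _ => 1
  | .flr h t => 1 + nL h + nLs t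
def nLs : List (BLtr Z) → ℕ
  | [] => 0
  | a :: t => nL a + nLs t
end

mutual
/-- Depth-sum of a letter starting at depth `d`. -/
def dL : ℕ → BLtr Z → ℕ
  | d, .of _ => d
  | d, .flr h t => d + dL (d+1) h + dLs (d+1) t
def dLs : ℕ → List (BLtr Z) → ℕ
  | _, [] => 0
  | d, a :: t => dL d a + dLs d t
end

end IAvg
namespace IAvg
variable {Z : Type*}

def toW (p : BLtr Z × List (BLtr Z)) : List (BLtr Z) := p.1 :: p.2
def toF (p : BLtr Z × List (BLtr Z)) : BLtr Z := .flr p.1 p.2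

/-- Normal form of a word (list of letters). -/
def nfW : List (BLtr Z) → List (BLtr Z)
  | [] => []
  | h :: t => toW (eW h t)

def consL (a : BLtr Z) : List (BLtr Z) → List (BLtr Z)
  | [] => [a]
  | x :: xs => toW (consN a (x, xs))

lemma toW_inj {p q : BLtr Z × List (BLtr Z)} (h : toW p = toW q) : p = q := by
  cases p; cases q; simp [toW] at h; simp [h.1, h.2]

lemma nfW_cons (h : BLtr Z) (t : List (BLtr Z)) :
    nfW (h :: t) = consL (eL h) (nfW t) := by
  cases t with
  | nil => simp [nfW, eW, consL, toW]
  | cons a s => simp [nfW, eW, consL, toW]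

lemma nfW_ne_nil {l : List (BLtr Z)} (h : l ≠ []) : nfW l ≠ [] := by
  cases l with
  | nil => exact absurd rfl h
  | cons a t => simp [nfW, toW]

lemma nfW_append (x y : List (BLtr Z)) :
    nfW (x ++ y) = x.foldr (fun b acc => consL (eL b) acc) (nfW y) := by
  induction x with
  | nil => simp
  | cons a t ih => simp [nfW_cons, ih]

theorem core (P Q : BLtr Z × List (BLtr Z)) :
    ∀ S, consN (toF P) (consN (toF Q) S) = consN (toF (consN (toF P) Q)) S
  | (.of z, rest) => by
      simp [consN, toF]
  | (.flr h3 t3, rest) => by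
      have ih := core P Q (h3, t3)
      simp [consN, toF] at ih ⊢
      simp [ih]
termination_by S => sizeOf S
decreasing_by all_goals (simp; try omega)

theorem core' (P Q : BLtr Z × List (BLtr Z)) (R : List (BLtr Z)) :
    consL (toF P) (consL (toF Q) R) = consL (toF (consN (toF P) Q)) R := by
  cases R with
  | nil => simp [consL, consN, toF, toW]
  | cons x xs =>
    cases x with
    | of z => simp [consL, consN, toF, toW]
    | flr h3 t3 =>
      have := core P Q (h3, t3)
      simp [consL, consN, toF, toW] at this ⊢
      simp [this]

end IAvg
namespace IAvg
variable {Z : Type*}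

/-- The head letter of a bracketed word. -/
def hd (w : BWord Z) : BLtr Z := w.1.head w.2
def tl (w : BWord Z) : List (BLtr Z) := w.1.tail
/-- The floor letter `⌊w⌋`. -/
def fl (w : BWord Z) : BLtr Z := .flr (hd w) (tl w)

lemma hd_tl (w : BWord Z) : hd w :: tl w = w.1 := List.cons_head_tail _

lemma bflr_val (w : BWord Z) : (BWord.flr w).1 = [fl w] := rfl

lemma cat_val (u v : BWord Z) : (BWord.cat u v).1 = u.1 ++ v.1 := rfl

lemma catflr_val (u v : BWord Z) : (BWord.cat (BWord.flr u) v).1 = fl u :: v.1 := by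
  simp [cat_val, bflr_val]

lemma hd_catflr (u v : BWord Z) : hd (BWord.cat (BWord.flr u) v) = fl u := by
  simp [hd, catflr_val]

lemma tl_catflr (u v : BWord Z) : tl (BWord.cat (BWord.flr u) v) = v.1 := by
  simp [tl, catflr_val]

lemma eL_fl (w : BWord Z) : eL (fl w) = toF (eW (hd w) (tl w)) := by
  simp [fl, eL, toF]

lemma nfW_eq_toW_eW (h : BLtr Z) (t : List (BLtr Z)) : nfW (h :: t) = toW (eW h t) := rfl

/-- `eL (fl w)` only depends on `nfW w.1`. -/
lemma eL_fl_congr {w₁ w₂ : BWord Z} (h : nfW w₁.1 = nfW w₂.1) : eL (fl w₁) = eL (fl w₂) := by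
  have h1 : nfW (hd w₁ :: tl w₁) = nfW (hd w₂ :: tl w₂) := by rw [hd_tl, hd_tl]; exact h
  rw [nfW_eq_toW_eW, nfW_eq_toW_eW] at h1
  rw [eL_fl, eL_fl, toW_inj h1]

/-- Local confluence core at word level. -/
lemma loc (u v : BWord Z) (r : List (BLtr Z)) :
    nfW ((BWord.cat (BWord.flr u) (BWord.flr v)).1 ++ r)
      = nfW ((BWord.flr (BWord.cat (BWord.flr u) v)).1 ++ r) := by
  have h1 : (BWord.cat (BWord.flr u) (BWord.flr v)).1 = [fl u, fl v] := by
    simp [cat_val, bflr_val]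
  have h2 : (BWord.flr (BWord.cat (BWord.flr u) v)).1 = [.flr (fl u) v.1] := by
    rw [bflr_val]
    simp [fl, hd_catflr, tl_catflr]
  rw [h1, h2]
  show nfW (fl u :: fl v :: r) = nfW (.flr (fl u) v.1 :: r)
  rw [nfW_cons, nfW_cons, nfW_cons]
  have hv : eL (BLtr.flr (fl u) v.1) = toF (consN (toF (eW (hd u) (tl u))) (eW (hd v) (tl v))) := by
    conv_lhs => rw [← hd_tl v]
    simp only [eL, toF]
    have : eW (fl u) (hd v :: tl v) = consN (eL (fl u)) (eW (hd v) (tl v)) := by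
      simp [eW]
    rw [this, eL_fl]
    simp [toF]
  rw [hv, eL_fl u, eL_fl v]
  exact core' _ _ _

lemma nfW_congr_left (l : List (BLtr Z)) {x y : List (BLtr Z)} (h : nfW x = nfW y) :
    nfW (l ++ x) = nfW (l ++ y) := by
  rw [nfW_append, nfW_append, h]

/-- Main lemma: the two sides of a rewrite have the same normal form. -/
theorem main_nf (q : Ctx Z) (u v : BWord Z) :
    nfW ((q.subst (BWord.cat (BWord.flr u) (BWord.flr v))).1)
      = nfW ((q.subst (BWord.flr (BWord.cat (BWord.flr u) v))).1) := by
  induction q with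
  | base l r =>
    show nfW (l ++ _ ++ r) = nfW (l ++ _ ++ r)
    rw [List.append_assoc, List.append_assoc]
    exact nfW_congr_left l (loc u v r)
  | deep l r q ih =>
    show nfW (l ++ (BWord.flr (q.subst _)).1 ++ r) = nfW (l ++ (BWord.flr (q.subst _)).1 ++ r)
    rw [List.append_assoc, List.append_assoc]
    refine nfW_congr_left l ?_
    rw [bflr_val, bflr_val, List.singleton_append, List.singleton_append,
      nfW_cons, nfW_cons, eL_fl_congr ih]

end IAvg
namespace IAvg
variable {Z : Type*}

mutual
theorem dL_succ : ∀ (d : ℕ) (a : BLtr Z), dL (d+1) a = dL d a + nL a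
  | d, .of z => by simp [dL, nL]
  | d, .flr h t => by
      simp only [dL, nL, dL_succ (d+1) h, dLs_succ (d+1) t]; omega
theorem dLs_succ : ∀ (d : ℕ) (l : List (BLtr Z)), dLs (d+1) l = dLs d l + nLs l
  | _, [] => by simp [dLs, nLs]
  | d, a :: t => by
      simp only [dLs, nLs, dL_succ d a, dLs_succ d t]; omega
end

mutual
theorem dL_le : ∀ (d : ℕ) (a : BLtr Z), dL d a ≤ d * nL a + nL a * nL a
  | d, .of z => by simp [dL, nL]
  | d, .flr h t => by
      have h1 := dL_le (d+1) h
      have h2 := dLs_le (d+1) t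
      simp only [dL, nL]
      nlinarith [h1, h2]
theorem dLs_le : ∀ (d : ℕ) (l : List (BLtr Z)), dLs d l ≤ d * nLs l + nLs l * nLs l
  | _, [] => by simp [dLs, nLs]
  | d, a :: t => by
      have h1 := dL_le d a
      have h2 := dLs_le d t
      simp only [dLs, nLs]
      nlinarith [h1, h2]
end

lemma one_le_nL (a : BLtr Z) : 1 ≤ nL a := by
  cases a <;> (simp [nL]; try omega)

lemma one_le_nLs (w : BWord Z) : 1 ≤ nLs w.1 := by
  rw [← hd_tl w]
  have := one_le_nL (hd w)
  simp [nLs]; omega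

lemma nLs_append (x y : List (BLtr Z)) : nLs (x ++ y) = nLs x + nLs y := by
  induction x with
  | nil => simp [nLs]
  | cons a t ih => simp [nLs, ih]; omega

lemma dLs_append (d : ℕ) (x y : List (BLtr Z)) : dLs d (x ++ y) = dLs d x + dLs d y := by
  induction x with
  | nil => simp [dLs]
  | cons a t ih => simp [dLs, ih]; omega

lemma nL_fl (w : BWord Z) : nL (fl w) = 1 + nLs w.1 := by
  rw [← hd_tl w]
  simp [fl, nL, nLs, hd_tl]
  omega

lemma dL_fl (d : ℕ) (w : BWord Z) : dL d (fl w) = d + dLs (d+1) w.1 := by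
  conv_rhs => rw [← hd_tl w]
  simp [fl, dL, dLs, hd_tl]
  omega

lemma nLs_redex (u v : BWord Z) :
    nLs (BWord.flr (BWord.cat (BWord.flr u) v)).1
      = nLs (BWord.cat (BWord.flr u) (BWord.flr v)).1 := by
  have h1 : (BWord.cat (BWord.flr u) (BWord.flr v)).1 = [fl u, fl v] := by
    simp [cat_val, bflr_val]
  have h2 : (BWord.flr (BWord.cat (BWord.flr u) v)).1 = [.flr (fl u) v.1] := by
    rw [bflr_val]; simp [fl, hd_catflr, tl_catflr]
  rw [h1, h2]
  simp [nLs, nL, nL_fl, ← hd_tl v]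
  omega

lemma dLs_redex (u v : BWord Z) (d : ℕ) :
    dLs d (BWord.flr (BWord.cat (BWord.flr u) v)).1
      = dLs d (BWord.cat (BWord.flr u) (BWord.flr v)).1 + (1 + nLs u.1) := by
  have h1 : (BWord.cat (BWord.flr u) (BWord.flr v)).1 = [fl u, fl v] := by
    simp [cat_val, bflr_val]
  have h2 : (BWord.flr (BWord.cat (BWord.flr u) v)).1 = [.flr (fl u) v.1] := by
    rw [bflr_val]; simp [fl, hd_catflr, tl_catflr]
  rw [h1, h2]
  have ev : dLs (d+1) v.1 = dL (d+1) (hd v) + dLs (d+1) (tl v) := by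
    rw [← hd_tl v]; simp [dLs]
  have e1 : dLs d [BLtr.flr (fl u) v.1] = d + dL (d+1) (fl u) + dLs (d+1) v.1 := by
    conv_lhs => rw [show (v.1 : List (BLtr Z)) = hd v :: tl v from (hd_tl v).symm]
    simp [dLs, dL, ev]
    try omega
  have e2 : dLs d [fl u, fl v] = dL d (fl u) + dL d (fl v) := by
    simp [dLs]
  rw [e1, e2, dL_fl, dL_fl, dL_fl, show d+1+1 = (d+1)+1 from rfl, dLs_succ (d+1) u.1]
  omega

theorem subst_measure (q : Ctx Z) (x y : BWord Z) (c : ℕ)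
    (hn : nLs y.1 = nLs x.1) (hdd : ∀ d, dLs d y.1 = dLs d x.1 + c) :
    nLs (q.subst y).1 = nLs (q.subst x).1 ∧
      ∀ d, dLs d (q.subst y).1 = dLs d (q.subst x).1 + c := by
  induction q with
  | base l r =>
    constructor
    · show nLs (l ++ y.1 ++ r) = nLs (l ++ x.1 ++ r)
      simp [nLs_append, hn]
    · intro d
      show dLs d (l ++ y.1 ++ r) = dLs d (l ++ x.1 ++ r) + c
      simp [dLs_append, hdd d]; omega
  | deep l r q ih =>
    obtain ⟨ihn, ihd⟩ := ih
    constructor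
    · show nLs (l ++ (BWord.flr (q.subst y)).1 ++ r) = nLs (l ++ (BWord.flr (q.subst x)).1 ++ r)
      rw [bflr_val, bflr_val]
      simp [nLs_append, nLs, nL_fl, ihn]
    · intro d
      show dLs d (l ++ (BWord.flr (q.subst y)).1 ++ r)
          = dLs d (l ++ (BWord.flr (q.subst x)).1 ++ r) + c
      rw [bflr_val, bflr_val]
      simp [dLs_append, dLs, dL_fl, ihd (d+1)]
      omega

/-- The termination measure of a word. -/
def mu (w : BWord Z) : ℕ := nLs w.1 + nLs w.1 * nLs w.1 - dLs 0 w.1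

theorem mu_lt (q : Ctx Z) (u v : BWord Z) :
    mu (q.subst (BWord.flr (BWord.cat (BWord.flr u) v)))
      < mu (q.subst (BWord.cat (BWord.flr u) (BWord.flr v))) := by
  obtain ⟨hn, hdd⟩ := subst_measure q (BWord.cat (BWord.flr u) (BWord.flr v))
    (BWord.flr (BWord.cat (BWord.flr u) v)) (1 + nLs u.1)
    (nLs_redex u v) (dLs_redex u v)
  set Y := q.subst (BWord.flr (BWord.cat (BWord.flr u) v))
  set X := q.subst (BWord.cat (BWord.flr u) (BWord.flr v))
  have hle : dLs 0 Y.1 ≤ 0 * nLs Y.1 + nLs Y.1 * nLs Y.1 := dLs_le 0 Y.1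
  have h1 : 1 ≤ nLs Y.1 := one_le_nLs Y
  have hd0 := hdd 0
  unfold mu
  rw [hn] at hle h1 ⊢
  omega

theorem redex_ne (q : Ctx Z) (u v : BWord Z) :
    q.subst (BWord.flr (BWord.cat (BWord.flr u) v))
      ≠ q.subst (BWord.cat (BWord.flr u) (BWord.flr v)) := by
  intro h
  exact absurd (congrArg mu h) (Nat.ne_of_lt (mu_lt q u v))

end IAvg
namespace IAvg
variable {Z : Type*}

/-- Prepend a letter to (the outermost level of) a context. -/
def pre (a : BLtr Z) : Ctx Z → Ctx Z
  | .base l r => .base (a :: l) r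
  | .deep l r q => .deep (a :: l) r q

lemma pre_subst (a : BLtr Z) (q : Ctx Z) (x : BWord Z) :
    ((pre a q).subst x).1 = a :: (q.subst x).1 := by
  cases q <;> simp [pre, Ctx.subst]

lemma consL_of (z : Z) (l : List (BLtr Z)) : consL (.of z) l = .of z :: l := by
  cases l <;> simp [consL, consN, toW]

lemma nfW_of_cons (z : Z) (t : List (BLtr Z)) : nfW (.of z :: t) = .of z :: nfW t := by
  rw [nfW_cons]
  simp [eL, consL_of]

lemma fl_eq_of_val {s : BWord Z} {h : BLtr Z} {t : List (BLtr Z)} (hs : s.1 = h :: t) :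
    fl s = .flr h t := by
  have := hd_tl s
  rw [hs] at this
  cases this
  rfl

/-- If a word is not in normal form, it contains a redex. -/
theorem redex_of_not_nf : ∀ (h : BLtr Z) (t : List (BLtr Z)),
    nfW (h :: t) ≠ h :: t →
    ∃ (q : Ctx Z) (u v : BWord Z),
      h :: t = (q.subst (BWord.cat (BWord.flr u) (BWord.flr v))).1
  | .of z, t => fun hne => by
      rw [nfW_of_cons] at hne
      have ht : nfW t ≠ t := fun h => hne (by rw [h])
      match t, ht with
      | b :: s, ht =>
        obtain ⟨q, u, v, he⟩ := redex_of_not_nf b s ht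
        exact ⟨pre (.of z) q, u, v, by rw [pre_subst, ← he]⟩
  | .flr hh ts, [] => fun hne => by
      have h1 : nfW [BLtr.flr hh ts] = [.flr (eW hh ts).1 (eW hh ts).2] := by
        simp [nfW, eW, toW, eL]
      rw [h1] at hne
      have h2 : nfW (hh :: ts) ≠ hh :: ts := by
        intro hcon
        apply hne
        have : (eW hh ts).1 :: (eW hh ts).2 = hh :: ts := hcon
        simp at this
        rw [this.1, this.2]
      obtain ⟨q, u, v, he⟩ := redex_of_not_nf hh ts h2
      refine ⟨.deep [] [] q, u, v, ?_⟩
      show [BLtr.flr hh ts] = [] ++ [fl (q.subst _)] ++ []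
      rw [fl_eq_of_val he.symm]
      simp
  | .flr hh ts, .of z :: t' => fun hne => by
      have h1 : nfW (BLtr.flr hh ts :: .of z :: t')
          = .flr (eW hh ts).1 (eW hh ts).2 :: .of z :: nfW t' := by
        rw [nfW_cons, nfW_of_cons]
        cases hnt : nfW t' with
        | nil => simp [eL, consL, consN, toW]
        | cons b s => simp [eL, consL, consN, toW]
      rw [h1] at hne
      by_cases hL : BLtr.flr (eW hh ts).1 (eW hh ts).2 = .flr hh ts
      · -- the inner rest is not normal
        have ht : nfW t' ≠ t' := by
          intro hcon
          exact hne (by rw [hL, hcon])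
        match t', ht with
        | b :: s, ht =>
          obtain ⟨q, u, v, he⟩ := redex_of_not_nf b s ht
          exact ⟨pre (.flr hh ts) (pre (.of z) q), u, v, by
            rw [pre_subst, pre_subst, ← he]⟩
      · -- the head letter is not normal
        have h2 : nfW (hh :: ts) ≠ hh :: ts := by
          intro hcon
          apply hL
          have : (eW hh ts).1 :: (eW hh ts).2 = hh :: ts := hcon
          simp at this
          rw [this.1, this.2]
        obtain ⟨q, u, v, he⟩ := redex_of_not_nf hh ts h2
        refine ⟨.deep [] (.of z :: t') q, u, v, ?_⟩
        show _ = [] ++ [fl (q.subst _)] ++ (.of z :: t')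
        rw [fl_eq_of_val he.symm]
        simp
  | .flr hh ts, .flr h2 t2 :: t' => fun _ => by
      refine ⟨.base [] t', ⟨hh :: ts, by simp⟩, ⟨h2 :: t2, by simp⟩, ?_⟩
      show _ = [] ++ (BWord.cat _ _).1 ++ t'
      rfl
termination_by h t => sizeOf h + sizeOf t
decreasing_by all_goals (simp; try omega)

end IAvg
namespace IAvg
variable {Z : Type*} {k : Type*} [Field k]

/-- Normal form of a bracketed word. -/
def nfB (w : BWord Z) : BWord Z := ⟨nfW w.1, nfW_ne_nil w.2⟩

lemma nfB_redex (q : Ctx Z) (u v : BWord Z) :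
    nfB (q.subst (BWord.cat (BWord.flr u) (BWord.flr v)))
      = nfB (q.subst (BWord.flr (BWord.cat (BWord.flr u) v))) :=
  Subtype.ext (main_nf q u v)

/-- Linear normal-form operator on the free module. -/
noncomputable def NF (f : BWord Z →₀ k) : BWord Z →₀ k := Finsupp.mapDomain nfB f

lemma step_eq {f g : BWord Z →₀ k} (h : InvAvgStep f g) :
    ∃ (q : Ctx Z) (u v : BWord Z),
      f (q.subst ((u.flr).cat v.flr)) ≠ 0 ∧
      g = f - Finsupp.single (q.subst ((u.flr).cat v.flr)) (f (q.subst ((u.flr).cat v.flr)))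
          + Finsupp.single (q.subst (BWord.flr ((u.flr).cat v)))
              (f (q.subst ((u.flr).cat v.flr))) := by
  obtain ⟨q, u, v, hne, hg⟩ := h
  exact ⟨q, u, v, hne, by rw [hg, Finsupp.smul_single', mul_one]⟩

lemma NF_step {f g : BWord Z →₀ k} (h : InvAvgStep f g) : NF g = NF f := by
  obtain ⟨q, u, v, hne, hg⟩ := step_eq h
  set t := q.subst ((u.flr).cat v.flr) with ht
  set t' := q.subst (BWord.flr ((u.flr).cat v)) with ht'
  have key : nfB t = nfB t' := nfB_redex q u v
  have hm : ∀ x : BWord Z →₀ k, Finsupp.mapDomain.addMonoidHom nfB x = Finsupp.mapDomain nfB x :=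
    fun _ => rfl
  have : NF g = NF f - Finsupp.single (nfB t) (f t) + Finsupp.single (nfB t') (f t) := by
    rw [NF, hg, ← hm, map_add, map_sub, hm, hm, hm, Finsupp.mapDomain_single,
      Finsupp.mapDomain_single]
    rfl
  rw [this, key, sub_add_cancel]

/-- The termination measure on the free module. -/
noncomputable def Phi (f : BWord Z →₀ k) : ℕ := f.support.sum fun w => mu w

lemma Phi_step {f g : BWord Z →₀ k} (h : InvAvgStep f g) : Phi g < Phi f := by
  classical
  obtain ⟨q, u, v, hne, hg⟩ := step_eq h
  set t := q.subst ((u.flr).cat v.flr) with ht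
  set t' := q.subst (BWord.flr ((u.flr).cat v)) with ht'
  have htne : t' ≠ t := redex_ne q u v
  have hmu : mu t' < mu t := mu_lt q u v
  have happ : ∀ w, g w = f w - Finsupp.single t (f t) w + Finsupp.single t' (f t) w := by
    intro w; rw [hg]; simp
  have hsupp : g.support ⊆ insert t' (f.support.erase t) := by
    intro w hw
    rw [Finsupp.mem_support_iff] at hw
    by_cases hwt' : w = t'
    · exact hwt' ▸ Finset.mem_insert_self _ _
    · by_cases hwt : w = t
      · exfalso
        apply hw
        rw [happ w, hwt, Finsupp.single_eq_same, Finsupp.single_eq_of_ne' htne]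
        ring
      · apply Finset.mem_insert_of_mem
        rw [Finset.mem_erase]
        refine ⟨hwt, ?_⟩
        rw [Finsupp.mem_support_iff]
        intro hf0
        apply hw
        rw [happ w, hf0, Finsupp.single_eq_of_ne' (Ne.symm hwt),
          Finsupp.single_eq_of_ne' (Ne.symm hwt')]
        ring
  have h1 : Phi g ≤ ∑ w ∈ insert t' (f.support.erase t), mu w :=
    Finset.sum_le_sum_of_subset hsupp
  have h2 : ∑ w ∈ insert t' (f.support.erase t), mu w ≤ mu t' + ∑ w ∈ f.support.erase t, mu w := by
    by_cases hmem : t' ∈ f.support.erase t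
    · rw [Finset.insert_eq_self.mpr hmem]; omega
    · rw [Finset.sum_insert hmem]
  have h3 : mu t + ∑ w ∈ f.support.erase t, mu w = Phi f :=
    Finset.add_sum_erase _ _ (Finsupp.mem_support_iff.mpr hne)
  omega

theorem invAvg_terminating : RelTerminating (InvAvgStep (Z := Z) (k := k)) := by
  rintro ⟨f, hf⟩
  have key : ∀ n, Phi (f n) + n ≤ Phi (f 0) := by
    intro n
    induction n with
    | zero => omega
    | succ m ih =>
      have := Phi_step (hf m)
      omega
  have := key (Phi (f 0) + 1)
  omega

theorem reach_NF : ∀ (n : ℕ) (f : BWord Z →₀ k), Phi f = n →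
    Relation.ReflTransGen InvAvgStep f (NF f) := by
  intro n
  induction n using Nat.strong_induction_on with
  | _ n ih =>
    intro f hn
    by_cases hnorm : ∀ w ∈ f.support, nfB w = w
    · have : NF f = f := by
        rw [NF, Finsupp.mapDomain_congr hnorm]
        exact Finsupp.mapDomain_id
      rw [this]
    · push_neg at hnorm
      obtain ⟨t, htm, htn⟩ := hnorm
      have hval : nfW t.1 ≠ t.1 := fun hc => htn (Subtype.ext hc)
      obtain ⟨h1, t1, hht⟩ : ∃ h1 t1, t.1 = h1 :: t1 := by
        cases hl : t.1 with
        | nil => exact absurd hl t.2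
        | cons a b => exact ⟨a, b, rfl⟩
      rw [hht] at hval
      obtain ⟨q, u, v, he⟩ := redex_of_not_nf h1 t1 hval
      have hteq : t = q.subst (BWord.cat (BWord.flr u) (BWord.flr v)) :=
        Subtype.ext (hht.trans he)
      have hft : f (q.subst ((u.flr).cat v.flr)) ≠ 0 := by
        rw [← hteq]; exact Finsupp.mem_support_iff.mp htm
      set g := f - Finsupp.single (q.subst ((u.flr).cat v.flr)) (f (q.subst ((u.flr).cat v.flr)))
          + f (q.subst ((u.flr).cat v.flr)) •
            Finsupp.single (q.subst (BWord.flr ((u.flr).cat v))) (1 : k) with hgdef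
      have hstep : InvAvgStep f g := ⟨q, u, v, hft, hgdef⟩
      have hlt : Phi g < Phi f := Phi_step hstep
      have hrec : Relation.ReflTransGen InvAvgStep g (NF g) :=
        ih (Phi g) (hn ▸ hlt) g rfl
      rw [NF_step hstep] at hrec
      exact Relation.ReflTransGen.head hstep hrec

lemma NF_rtg {f g : BWord Z →₀ k} (h : Relation.ReflTransGen InvAvgStep f g) :
    NF f = NF g := by
  induction h with
  | refl => rfl
  | tail _ hstep ih => rw [ih, NF_step hstep]

theorem invAvg_confluent : RelConfluent (InvAvgStep (Z := Z) (k := k)) := by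
  intro f g₁ g₂ h1 h2
  refine ⟨NF g₁, reach_NF _ g₁ rfl, ?_⟩
  have : NF g₂ = NF g₁ := by rw [← NF_rtg h1, ← NF_rtg h2]
  exact this ▸ reach_NF _ g₂ rfl

end IAvg

/-- The rewriting system of the inverse average operator identity is convergent:
terminating and confluent. -/
theorem inverseAverage_rewriting_convergent {Z k : Type*} [Field k] :
    RelTerminating (InvAvgStep (Z := Z) (k := k)) ∧
      RelConfluent (InvAvgStep (Z := Z) (k := k)) :=
  ⟨IAvg.invAvg_terminating, IAvg.invAvg_confluent⟩
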